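/- Let m ≥ 5 be an integer, and let G ≤ GL(4,ℂ) be the subgroup generated by the 24 permutation matrices of the four coordinates together with all diagonal matrices diag(ε₁, ε₂, ε₃, ε₄) where each εᵢ is an m-th root of unity. Then every homogeneous polynomial in ℂ[x,y,u,v] of degree 4 that is a semi-invariant of G is a scalar multiple of the monomial xyuv; conversely, xyuv is a semi-invariant of G. -/

import Mathlib

open Matrix MvPolynomial

/-- The subgroup of `GL(4, ℂ)` generated by the 24 permutation matrices of the four
coordinates together with all diagonal matrices whose entries are `m`-th roots of unity. -/
def fermatGroup (m : ℕ) : Subgroup (GL (Fin 4) ℂ) :=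
  Subgroup.closure
    {g | (∃ σ : Equiv.Perm (Fin 4),
        (g : Matrix (Fin 4) (Fin 4) ℂ) = Matrix.of fun i j => if i = σ j then 1 else 0) ∨
      (∃ ε : Fin 4 → ℂ, (∀ i, ε i ^ m = 1) ∧
        (g : Matrix (Fin 4) (Fin 4) ℂ) = Matrix.diagonal ε)}

namespace Stmt11Aux

noncomputable section

/-- permutation matrix -/
def Pm (σ : Equiv.Perm (Fin 4)) : Matrix (Fin 4) (Fin 4) ℂ :=
  Matrix.of fun i j => if i = σ j then 1 else 0

lemma Pm_mul (σ τ : Equiv.Perm (Fin 4)) : Pm σ * Pm τ = Pm (σ * τ) := by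
  ext i k
  rw [Matrix.mul_apply]
  rw [Finset.sum_eq_single (τ k)]
  · simp [Pm]; rfl
  · intro j _ hj
    simp [Pm, hj]
  · simp

lemma Pm_one : Pm 1 = 1 := by
  ext i j
  simp [Pm, Matrix.one_apply]; rfl

lemma mulVec_Pm (τ : Equiv.Perm (Fin 4)) (v : Fin 4 → ℂ) :
    Pm τ *ᵥ v = fun i => v (τ⁻¹ i) := by
  funext i
  rw [Matrix.mulVec, dotProduct, Finset.sum_eq_single (τ⁻¹ i)]
  · simp [Pm]
  · intro j _ hj
    have : ¬ i = τ j := by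
      intro h; exact hj (by simp [h])
    simp [Pm, this]
  · simp

/-- permutation element of GL -/
def glPerm (σ : Equiv.Perm (Fin 4)) : GL (Fin 4) ℂ :=
  ⟨Pm σ, Pm σ⁻¹, by rw [Pm_mul, mul_inv_cancel, Pm_one], by rw [Pm_mul, inv_mul_cancel, Pm_one]⟩

/-- diagonal element of GL -/
def glDiag (ε : Fin 4 → ℂ) (hε : ∀ i, ε i ≠ 0) : GL (Fin 4) ℂ :=
  ⟨Matrix.diagonal ε, Matrix.diagonal (fun i => (ε i)⁻¹),
    by rw [Matrix.diagonal_mul_diagonal,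
        show (fun i => ε i * (ε i)⁻¹) = fun _ => (1:ℂ) from funext fun i => mul_inv_cancel₀ (hε i),
        Matrix.diagonal_one],
    by rw [Matrix.diagonal_mul_diagonal,
        show (fun i => (ε i)⁻¹ * ε i) = fun _ => (1:ℂ) from funext fun i => inv_mul_cancel₀ (hε i),
        Matrix.diagonal_one]⟩

lemma aeval_scale_monomial (c : Fin 4 → ℂ) (s : Fin 4 →₀ ℕ) (a : ℂ) :
    aeval (fun i => C (c i) * X i) (monomial s a) = monomial s ((∏ i, c i ^ s i) * a) := by
  rw [aeval_monomial, monomial_eq]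
  have h1 : (s.prod fun n e => (C (c n) * X n) ^ e)
      = C (∏ i ∈ s.support, c i ^ s i) * s.prod fun n e => (X n : MvPolynomial (Fin 4) ℂ) ^ e := by
    rw [Finsupp.prod, Finsupp.prod, map_prod, ← Finset.prod_mul_distrib]
    refine Finset.prod_congr rfl fun i _ => ?_
    rw [mul_pow, C_pow]
  have h2 : (∏ i ∈ s.support, c i ^ s i) = ∏ i, c i ^ s i := by
    refine Finset.prod_subset (Finset.subset_univ _) fun i _ hi => ?_
    rw [Finsupp.notMem_support_iff.mp hi, pow_zero]
  rw [h1, h2]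
  rw [algebraMap_eq, ← mul_assoc, ← C_mul, mul_comm a]

lemma coeff_aeval_scale (c : Fin 4 → ℂ) (f : MvPolynomial (Fin 4) ℂ) (α : Fin 4 →₀ ℕ) :
    coeff α (aeval (fun i => C (c i) * X i) f) = (∏ i, c i ^ α i) * coeff α f := by
  induction f using MvPolynomial.induction_on' with
  | monomial s a =>
    rw [aeval_scale_monomial, coeff_monomial, coeff_monomial]
    split
    · next h => subst h; ring
    · ring
  | add p q hp hq =>
    rw [map_add, coeff_add, coeff_add, hp, hq]
    ring

lemma eval_aeval_scale (c v : Fin 4 → ℂ) (f : MvPolynomial (Fin 4) ℂ) :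
    eval v (aeval (fun i => C (c i) * X i) f) = eval (fun i => c i * v i) f := by
  have h := comp_aeval_apply (f := fun i => C (c i) * X i)
    (aeval v : MvPolynomial (Fin 4) ℂ →ₐ[ℂ] ℂ) f
  have e1 : ∀ (g : Fin 4 → ℂ) (p : MvPolynomial (Fin 4) ℂ),
      (aeval g : MvPolynomial (Fin 4) ℂ →ₐ[ℂ] ℂ) p = eval g p := by
    intro g p
    rw [← coe_aeval_eq_eval]
    rfl
  rw [e1] at h
  rw [h]
  have : (fun i => (aeval v : MvPolynomial (Fin 4) ℂ →ₐ[ℂ] ℂ) (C (c i) * X i))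
      = fun i => c i * v i := by
    funext i; simp
  rw [this, e1]

lemma eval_prod4 (v : Fin 4 → ℂ) :
    eval v (X 0 * X 1 * X 2 * X 3 : MvPolynomial (Fin 4) ℂ) = ∏ i, v i := by
  simp [Fin.prod_univ_four]

/-- Part 1. -/
lemma part1 (m : ℕ) (hm : 5 ≤ m) (f : MvPolynomial (Fin 4) ℂ) (hf : f.IsHomogeneous 4)
    (H : ∃ χ : fermatGroup m →* ℂˣ, ∀ (g : fermatGroup m) (v : Fin 4 → ℂ),
      MvPolynomial.eval
          (Matrix.mulVec (((g : GL (Fin 4) ℂ)⁻¹ : GL (Fin 4) ℂ) : Matrix (Fin 4) (Fin 4) ℂ) v) f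
        = (χ g : ℂ) * MvPolynomial.eval v f) :
    ∃ c : ℂ, f = c • (X 0 * X 1 * X 2 * X 3) := by
  by_cases hf0 : f = 0
  · exact ⟨0, by simp [hf0]⟩
  obtain ⟨χ, hχ⟩ := H
  have hm0 : m ≠ 0 := by omega
  set ζ := Complex.exp (2 * Real.pi * Complex.I / m) with hζdef
  have hζ : IsPrimitiveRoot ζ m := Complex.isPrimitiveRoot_exp m hm0
  -- diagonal semi-invariance gives coefficient relations
  have hdiag : ∀ (ε : Fin 4 → ℂ), (∀ i, ε i ^ m = 1) →
      ∃ t : ℂ, ∀ α : Fin 4 →₀ ℕ,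
        (∏ i, ((ε i)⁻¹) ^ α i) * coeff α f = t * coeff α f := by
    intro ε hε
    have hne : ∀ i, ε i ≠ 0 := by
      intro i h
      have := hε i
      rw [h, zero_pow hm0] at this
      exact zero_ne_one this
    set g : GL (Fin 4) ℂ := glDiag ε hne with hg
    have hgmem : g ∈ fermatGroup m := Subgroup.subset_closure (Or.inr ⟨ε, hε, rfl⟩)
    refine ⟨(χ ⟨g, hgmem⟩ : ℂ), fun α => ?_⟩
    have h1 : ∀ v : Fin 4 → ℂ,
        eval (fun i => (ε i)⁻¹ * v i) f = (χ ⟨g, hgmem⟩ : ℂ) * eval v f := by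
      intro v
      have h := hχ ⟨g, hgmem⟩ v
      have hmat : (((⟨g, hgmem⟩ : fermatGroup m) : GL (Fin 4) ℂ)⁻¹ : GL (Fin 4) ℂ).val
          = Matrix.diagonal (fun i => (ε i)⁻¹) := rfl
      rw [hmat] at h
      have hmv : Matrix.diagonal (fun i => (ε i)⁻¹) *ᵥ v = fun i => (ε i)⁻¹ * v i :=
        funext fun i => Matrix.mulVec_diagonal _ _ _
      rwa [hmv] at h
    have hpoly : aeval (fun i => C ((ε i)⁻¹) * X i) f = C ((χ ⟨g, hgmem⟩ : ℂ)) * f := by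
      apply MvPolynomial.funext
      intro v
      rw [eval_aeval_scale, h1, _root_.map_mul, eval_C]
    have h2 := congrArg (coeff α) hpoly
    rwa [coeff_aeval_scale, coeff_C_mul] at h2
  -- exponents in the support agree coordinatewise
  have hbound : ∀ α ∈ f.support, ∀ j : Fin 4, α j < m := by
    intro α hα j
    have h4 : Finsupp.weight 1 α = 4 := hf (MvPolynomial.mem_support_iff.mp hα)
    have : α.degree = 4 := by rw [Finsupp.degree_eq_weight_one]; exact h4
    have := Finsupp.le_degree j α
    omega
  have key : ∀ α ∈ f.support, ∀ β ∈ f.support, α = β := by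
    intro α hα β hβ
    ext j
    obtain ⟨t, ht⟩ := hdiag (fun i => if i = j then ζ else 1)
      (by intro i; by_cases h : i = j <;> simp [h, hζ.pow_eq_one])
    have hprod : ∀ γ : Fin 4 →₀ ℕ,
        (∏ i, ((if i = j then ζ else 1 : ℂ))⁻¹ ^ γ i) = (ζ⁻¹) ^ γ j := by
      intro γ
      rw [Finset.prod_eq_single j]
      · simp
      · intro i _ hi; simp [hi]
      · simp
    have hαe : (ζ⁻¹) ^ α j = t := by
      have := ht α; rw [hprod α] at this
      exact mul_right_cancel₀ (MvPolynomial.mem_support_iff.mp hα) this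
    have hβe : (ζ⁻¹) ^ β j = t := by
      have := ht β; rw [hprod β] at this
      exact mul_right_cancel₀ (MvPolynomial.mem_support_iff.mp hβ) this
    exact hζ.inv.pow_inj (hbound α hα j) (hbound β hβ j) (hαe.trans hβe.symm)
  obtain ⟨α₀, hα₀⟩ := (MvPolynomial.support_nonempty.mpr hf0)
  have hc0 : coeff α₀ f ≠ 0 := MvPolynomial.mem_support_iff.mp hα₀
  have hsupp : ∀ β ∈ f.support, β = α₀ := fun β hβ => key β hβ α₀ hα₀
  have hfm : f = monomial α₀ (coeff α₀ f) := by
    ext β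
    rw [coeff_monomial]
    split
    · next h => rw [h]
    · next h =>
      by_contra hb
      exact h ((hsupp β (MvPolynomial.mem_support_iff.mpr hb)).symm)
  -- permutation invariance
  have hperm : ∀ σ : Equiv.Perm (Fin 4), Finsupp.mapDomain σ α₀ = α₀ := by
    intro σ
    have hgmem : glPerm σ ∈ fermatGroup m := Subgroup.subset_closure (Or.inl ⟨σ, rfl⟩)
    have h1 : ∀ v : Fin 4 → ℂ,
        eval (fun i => v (σ i)) f = (χ ⟨glPerm σ, hgmem⟩ : ℂ) * eval v f := by
      intro v
      have h := hχ ⟨glPerm σ, hgmem⟩ v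
      have hmat : (((⟨glPerm σ, hgmem⟩ : fermatGroup m) : GL (Fin 4) ℂ)⁻¹ : GL (Fin 4) ℂ).val
          = Pm σ⁻¹ := rfl
      rw [hmat, mulVec_Pm] at h
      simpa using h
    have hpoly : rename σ f = C ((χ ⟨glPerm σ, hgmem⟩ : ℂ)) * f := by
      apply MvPolynomial.funext
      intro v
      rw [eval_rename, _root_.map_mul, eval_C]
      exact h1 v
    by_contra hne
    have h2 := congrArg (coeff (Finsupp.mapDomain σ α₀)) hpoly
    rw [MvPolynomial.coeff_rename_mapDomain σ σ.injective f α₀, coeff_C_mul] at h2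
    have h3 : coeff (Finsupp.mapDomain σ α₀) f = 0 := by
      by_contra hb
      exact hne (hsupp _ (MvPolynomial.mem_support_iff.mpr hb))
    rw [h3, mul_zero] at h2
    exact hc0 h2
  have hconst : ∀ i j : Fin 4, α₀ i = α₀ j := by
    intro i j
    have h := hperm (Equiv.swap i j)
    have h2 := Finsupp.mapDomain_apply (Equiv.swap i j).injective α₀ j
    rw [h] at h2
    rw [Equiv.swap_apply_right] at h2
    exact h2
  have hsum : ∑ i : Fin 4, α₀ i = 4 := by
    have h4 : Finsupp.weight 1 α₀ = 4 := hf hc0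
    have hdeg : α₀.degree = 4 := by rw [Finsupp.degree_eq_weight_one]; exact h4
    have : α₀.degree = ∑ i : Fin 4, α₀ i :=
      Finset.sum_subset (Finset.subset_univ _)
        (fun i _ h => Finsupp.notMem_support_iff.mp h)
    omega
  have hone : ∀ i : Fin 4, α₀ i = 1 := by
    have h0 : (4 : ℕ) * α₀ 0 = 4 := by
      have : ∑ i : Fin 4, α₀ i = ∑ _i : Fin 4, α₀ 0 :=
        Finset.sum_congr rfl fun i _ => hconst i 0
      rw [this, Finset.sum_const] at hsum
      simpa using hsum
    intro i
    have : α₀ 0 = 1 := by omega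
    rw [hconst i 0, this]
  have hXp : (X 0 * X 1 * X 2 * X 3 : MvPolynomial (Fin 4) ℂ) = monomial α₀ 1 := by
    have hα₀ : α₀ = Finsupp.single 0 1 + Finsupp.single 1 1 + Finsupp.single 2 1
        + Finsupp.single 3 1 := by
      ext i
      fin_cases i <;>
        simp [hone, Finsupp.single_apply]
    rw [hα₀]
    simp [X, monomial_mul]
  refine ⟨coeff α₀ f, ?_⟩
  rw [hXp, smul_monomial, smul_eq_mul, mul_one]
  exact hfm

set_option maxHeartbeats 1000000 in
/-- Part 2. -/
lemma part2 (m : ℕ) (hm : 5 ≤ m) :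
    ∃ χ : fermatGroup m →* ℂˣ, ∀ (g : fermatGroup m) (v : Fin 4 → ℂ),
      MvPolynomial.eval
          (Matrix.mulVec (((g : GL (Fin 4) ℂ)⁻¹ : GL (Fin 4) ℂ) : Matrix (Fin 4) (Fin 4) ℂ) v)
          (X 0 * X 1 * X 2 * X 3 : MvPolynomial (Fin 4) ℂ)
        = (χ g : ℂ) * MvPolynomial.eval v (X 0 * X 1 * X 2 * X 3 : MvPolynomial (Fin 4) ℂ) := by
  have hm0 : m ≠ 0 := by omega
  set p : MvPolynomial (Fin 4) ℂ := X 0 * X 1 * X 2 * X 3 with hp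
  have key : ∀ g : GL (Fin 4) ℂ, g ∈ fermatGroup m →
      ∃ c : ℂˣ, ∀ v : Fin 4 → ℂ,
        eval (((g⁻¹ : GL (Fin 4) ℂ) : Matrix (Fin 4) (Fin 4) ℂ) *ᵥ v) p = (c : ℂ) * eval v p := by
    intro g hg
    induction hg using Subgroup.closure_induction with
    | mem x hx =>
      rcases hx with ⟨σ, hσ⟩ | ⟨ε, hε, hεeq⟩
      · have hσ' : (x : Matrix (Fin 4) (Fin 4) ℂ) = Pm σ := hσ
        refine ⟨1, fun v => ?_⟩
        have hinv : ((x⁻¹ : GL (Fin 4) ℂ) : Matrix (Fin 4) (Fin 4) ℂ) = Pm σ⁻¹ :=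
          Units.inv_eq_of_mul_eq_one_right
            (by rw [hσ', Pm_mul, mul_inv_cancel, Pm_one])
        rw [hinv, mulVec_Pm, eval_prod4, eval_prod4, Units.val_one, one_mul]
        simp only [inv_inv]
        exact Equiv.prod_comp σ v
      · have hne : ∀ i, ε i ≠ 0 := by
          intro i h
          have := hε i
          rw [h, zero_pow hm0] at this
          exact zero_ne_one this
        refine ⟨Units.mk (∏ i, (ε i)⁻¹) (∏ i, ε i) ?_ ?_, fun v => ?_⟩
        · rw [← Finset.prod_mul_distrib]
          rw [show (fun i => (ε i)⁻¹ * ε i) = fun _ => (1:ℂ) from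
            funext fun i => inv_mul_cancel₀ (hne i)]
          simp
        · rw [← Finset.prod_mul_distrib]
          rw [show (fun i => ε i * (ε i)⁻¹) = fun _ => (1:ℂ) from
            funext fun i => mul_inv_cancel₀ (hne i)]
          simp
        · have hinv : ((x⁻¹ : GL (Fin 4) ℂ) : Matrix (Fin 4) (Fin 4) ℂ)
              = Matrix.diagonal (fun i => (ε i)⁻¹) :=
            Units.inv_eq_of_mul_eq_one_right
              (by
                rw [hεeq, Matrix.diagonal_mul_diagonal,
                  show (fun i => ε i * (ε i)⁻¹) = fun _ => (1:ℂ) from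
                    funext fun i => mul_inv_cancel₀ (hne i),
                  Matrix.diagonal_one])
          have hmv : Matrix.diagonal (fun i => (ε i)⁻¹) *ᵥ v = fun i => (ε i)⁻¹ * v i :=
            funext fun i => Matrix.mulVec_diagonal _ _ _
          rw [hinv, hmv, eval_prod4, eval_prod4, Units.val_mk, ← Finset.prod_mul_distrib]
    | one =>
      refine ⟨1, fun v => ?_⟩
      rw [inv_one, Units.val_one, Matrix.one_mulVec, Units.val_one, one_mul]
    | mul x y hx hy ihx ihy =>
      obtain ⟨cx, hcx⟩ := ihx
      obtain ⟨cy, hcy⟩ := ihy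
      refine ⟨cx * cy, fun v => ?_⟩
      have h1 : (((x * y)⁻¹ : GL (Fin 4) ℂ) : Matrix (Fin 4) (Fin 4) ℂ)
          = ((y⁻¹ : GL (Fin 4) ℂ) : Matrix (Fin 4) (Fin 4) ℂ)
            * ((x⁻¹ : GL (Fin 4) ℂ) : Matrix (Fin 4) (Fin 4) ℂ) := by
        rw [_root_.mul_inv_rev]; rfl
      rw [h1, ← Matrix.mulVec_mulVec, hcy, hcx, Units.val_mul]
      ring
    | inv x hx ih =>
      obtain ⟨c, hc⟩ := ih
      refine ⟨c⁻¹, fun v => ?_⟩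
      have h1 := hc (((x : GL (Fin 4) ℂ) : Matrix (Fin 4) (Fin 4) ℂ) *ᵥ v)
      have h2 : ((x⁻¹ : GL (Fin 4) ℂ) : Matrix (Fin 4) (Fin 4) ℂ)
          *ᵥ (((x : GL (Fin 4) ℂ) : Matrix (Fin 4) (Fin 4) ℂ) *ᵥ v) = v := by
        rw [Matrix.mulVec_mulVec,
          show ((x⁻¹ : GL (Fin 4) ℂ) : Matrix (Fin 4) (Fin 4) ℂ)
              * ((x : GL (Fin 4) ℂ) : Matrix (Fin 4) (Fin 4) ℂ) = 1 from x.inv_mul,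
          Matrix.one_mulVec]
      rw [h2] at h1
      have h3 : (((x⁻¹)⁻¹ : GL (Fin 4) ℂ) : Matrix (Fin 4) (Fin 4) ℂ)
          = ((x : GL (Fin 4) ℂ) : Matrix (Fin 4) (Fin 4) ℂ) := by rw [inv_inv]
      rw [h3, h1, Units.val_inv_eq_inv_val]
      field_simp
  have key' : ∀ g : fermatGroup m, ∃ c : ℂˣ, ∀ v : Fin 4 → ℂ,
      eval ((((g : GL (Fin 4) ℂ))⁻¹ : GL (Fin 4) ℂ).val *ᵥ v) p = (c : ℂ) * eval v p :=
    fun g => key g g.2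
  choose c hc using key'
  have eval1 : eval (fun _ => (1:ℂ)) p = 1 := by rw [eval_prod4]; simp
  have huniq : ∀ (g : fermatGroup m) (t : ℂˣ),
      (∀ v : Fin 4 → ℂ, eval ((((g : GL (Fin 4) ℂ))⁻¹ : GL (Fin 4) ℂ).val *ᵥ v) p
        = (t : ℂ) * eval v p) → t = c g := by
    intro g t ht
    have h := (ht (fun _ => 1)).symm.trans (hc g (fun _ => 1))
    rw [eval1, mul_one, mul_one] at h
    exact Units.ext h
  refine ⟨MonoidHom.mk' c ?_, hc⟩
  intro a b
  refine (huniq (a * b) (c a * c b) ?_).symm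
  intro v
  have h1 : ((((a * b : fermatGroup m) : GL (Fin 4) ℂ))⁻¹ : GL (Fin 4) ℂ).val
      = (((b : GL (Fin 4) ℂ))⁻¹ : GL (Fin 4) ℂ).val
        * (((a : GL (Fin 4) ℂ))⁻¹ : GL (Fin 4) ℂ).val := by
    rw [show ((a * b : fermatGroup m) : GL (Fin 4) ℂ) = (a : GL (Fin 4) ℂ) * b from rfl,
      _root_.mul_inv_rev]
    rfl
  rw [h1, ← Matrix.mulVec_mulVec, hc b, hc a, Units.val_mul]
  ring

end

end Stmt11Aux

/-- For `m ≥ 5`, every degree-4 homogeneous semi-invariant of the group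
generated by the coordinate permutation matrices and the diagonal matrices with `m`-th root
of unity entries is a scalar multiple of `xyuv`; conversely, `xyuv` is a semi-invariant. -/
theorem stmt_11 (m : ℕ) (hm : 5 ≤ m) :
    (∀ f : MvPolynomial (Fin 4) ℂ, f.IsHomogeneous 4 →
      (∃ χ : fermatGroup m →* ℂˣ, ∀ (g : fermatGroup m) (v : Fin 4 → ℂ),
        MvPolynomial.eval
            (Matrix.mulVec (((g : GL (Fin 4) ℂ)⁻¹ : GL (Fin 4) ℂ) : Matrix (Fin 4) (Fin 4) ℂ) v) f
          = (χ g : ℂ) * MvPolynomial.eval v f) →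
      ∃ c : ℂ, f = c • (X 0 * X 1 * X 2 * X 3)) ∧
    (∃ χ : fermatGroup m →* ℂˣ, ∀ (g : fermatGroup m) (v : Fin 4 → ℂ),
      MvPolynomial.eval
          (Matrix.mulVec (((g : GL (Fin 4) ℂ)⁻¹ : GL (Fin 4) ℂ) : Matrix (Fin 4) (Fin 4) ℂ) v)
          (X 0 * X 1 * X 2 * X 3 : MvPolynomial (Fin 4) ℂ)
        = (χ g : ℂ) * MvPolynomial.eval v (X 0 * X 1 * X 2 * X 3 : MvPolynomial (Fin 4) ℂ)) :=
  ⟨fun f hf H => Stmt11Aux.part1 m hm f hf H, Stmt11Aux.part2 m hm⟩
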